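/- Let f > 0, b > 0, and C₂ be real numbers, and define φ(η) = (b/(2f))/(1 + exp(−(b/(2√f))·(η + C₂))). Then φ satisfies φ·φ'' − (φ')² = f·φ⁴ − (b/2)·φ³ for all η ∈ ℝ. In particular, for b = 1 the solution φ has the form of the Fermi–Dirac distribution (a constant multiple of 1/(e^x + 1)). -/

import Mathlib

private lemma aux_inner (K C₂ : ℝ) (η : ℝ) :
    HasDerivAt (fun η : ℝ => Real.exp (-K * (η + C₂)))
      (Real.exp (-K * (η + C₂)) * (-K)) η := by
  have h1 : HasDerivAt (fun η : ℝ => -K * (η + C₂)) (-K) η := by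
    simpa using ((hasDerivAt_id η).add_const C₂).const_mul (-K)
  exact h1.exp

private lemma aux_d1 (A K C₂ : ℝ) (η : ℝ) :
    HasDerivAt (fun η : ℝ => A / (1 + Real.exp (-K * (η + C₂))))
      (A * K * Real.exp (-K * (η + C₂)) / (1 + Real.exp (-K * (η + C₂))) ^ 2) η := by
  have hpos : (0:ℝ) < 1 + Real.exp (-K * (η + C₂)) := by positivity
  have h2 : HasDerivAt (fun η : ℝ => 1 + Real.exp (-K * (η + C₂)))
      (Real.exp (-K * (η + C₂)) * (-K)) η := (aux_inner K C₂ η).const_add 1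
  have := (hasDerivAt_const η A).div h2 hpos.ne'
  convert this using 1 <;> first | rfl | ring

private lemma aux_d2 (A K C₂ : ℝ) (η : ℝ) :
    HasDerivAt (fun η : ℝ =>
        A * K * Real.exp (-K * (η + C₂)) / (1 + Real.exp (-K * (η + C₂))) ^ 2)
      ((A * K * (Real.exp (-K * (η + C₂)) * (-K)) * (1 + Real.exp (-K * (η + C₂))) ^ 2
        - A * K * Real.exp (-K * (η + C₂)) *
          (2 * (1 + Real.exp (-K * (η + C₂))) * (Real.exp (-K * (η + C₂)) * (-K))))
        / ((1 + Real.exp (-K * (η + C₂))) ^ 2) ^ 2) η := by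
  have hpos : (0:ℝ) < 1 + Real.exp (-K * (η + C₂)) := by positivity
  have hnum : HasDerivAt (fun η : ℝ => A * K * Real.exp (-K * (η + C₂)))
      (A * K * (Real.exp (-K * (η + C₂)) * (-K))) η :=
    (aux_inner K C₂ η).const_mul (A * K)
  have hden : HasDerivAt (fun η : ℝ => (1 + Real.exp (-K * (η + C₂))) ^ 2)
      (2 * (1 + Real.exp (-K * (η + C₂))) * (Real.exp (-K * (η + C₂)) * (-K))) η := by
    have := ((aux_inner K C₂ η).const_add 1).pow 2
    convert this using 1 <;> first | rfl | ring
  have hd0 : (1 + Real.exp (-K * (η + C₂))) ^ 2 ≠ 0 := by positivity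
  exact hnum.div hden hd0

theorem stmt_13 (f b C₂ : ℝ) (hf : 0 < f) (hb : 0 < b) :
    (∀ η : ℝ,
      (fun η => (b / (2 * f)) / (1 + Real.exp (-(b / (2 * Real.sqrt f)) * (η + C₂)))) η
          * deriv (deriv (fun η =>
              (b / (2 * f)) / (1 + Real.exp (-(b / (2 * Real.sqrt f)) * (η + C₂))))) η
        - (deriv (fun η =>
              (b / (2 * f)) / (1 + Real.exp (-(b / (2 * Real.sqrt f)) * (η + C₂)))) η) ^ 2
        = f * ((fun η =>
              (b / (2 * f)) / (1 + Real.exp (-(b / (2 * Real.sqrt f)) * (η + C₂)))) η) ^ 4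
          - (b / 2) * ((fun η =>
              (b / (2 * f)) / (1 + Real.exp (-(b / (2 * Real.sqrt f)) * (η + C₂)))) η) ^ 3)
    ∧ (b = 1 → ∃ c k d : ℝ, ∀ η : ℝ,
        (b / (2 * f)) / (1 + Real.exp (-(b / (2 * Real.sqrt f)) * (η + C₂)))
          = c / (Real.exp (k * η + d) + 1)) := by
  set A := b / (2 * f) with hA
  set K := b / (2 * Real.sqrt f) with hK
  constructor
  · intro η
    have hderiv1 : deriv (fun η : ℝ => A / (1 + Real.exp (-K * (η + C₂))))
        = fun η : ℝ => A * K * Real.exp (-K * (η + C₂))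
            / (1 + Real.exp (-K * (η + C₂))) ^ 2 :=
      funext fun η => (aux_d1 A K C₂ η).deriv
    simp only
    rw [hderiv1]; simp only; rw [(aux_d2 A K C₂ η).deriv]
    set u := Real.exp (-K * (η + C₂)) with hu
    have hupos : (0:ℝ) < u := Real.exp_pos _
    have hdpos : (0:ℝ) < 1 + u := by positivity
    have hs : Real.sqrt f * Real.sqrt f = f := Real.mul_self_sqrt hf.le
    have hs0 : Real.sqrt f ≠ 0 := by positivity
    rw [hA, hK]
    have h4 : Real.sqrt f ^ 4 = f ^ 2 := by
      rw [show (4:ℕ) = 2*2 from rfl, pow_mul, Real.sq_sqrt hf.le]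
    have h6 : Real.sqrt f ^ 6 = f ^ 3 := by
      rw [show (6:ℕ) = 2*3 from rfl, pow_mul, Real.sq_sqrt hf.le]
    field_simp
    ring_nf
    rw [Real.sq_sqrt hf.le]
    ring
  · intro hb1
    exact ⟨A, -K, -K * C₂, fun η => by rw [add_comm (Real.exp _) 1]; ring_nf⟩
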